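/- Let K be a field of characteristic zero, let η ∈ K be nonzero and not a root of unity, and let A = A_η = A(1+η, −η, 1) with ε = (η−1)⁻¹ and w = −ud + du + ε. Let N = A/A(d−1). Then every nonzero A-submodule U of N contains the image of w^m in N for some m ≥ 0. -/

import Mathlib

universe u

noncomputable section

def duRel (K : Type u) [Field K] (α β γ : K) :
    FreeAlgebra K (Fin 2) → FreeAlgebra K (Fin 2) → Prop := fun X Y =>
  (X = FreeAlgebra.ι K (0 : Fin 2) * FreeAlgebra.ι K (0 : Fin 2) * FreeAlgebra.ι K (1 : Fin 2) ∧
   Y = α • (FreeAlgebra.ι K (0 : Fin 2) * FreeAlgebra.ι K (1 : Fin 2) * FreeAlgebra.ι K (0 : Fin 2)) +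
       β • (FreeAlgebra.ι K (1 : Fin 2) * FreeAlgebra.ι K (0 : Fin 2) * FreeAlgebra.ι K (0 : Fin 2)) +
       γ • FreeAlgebra.ι K (0 : Fin 2)) ∨
  (X = FreeAlgebra.ι K (0 : Fin 2) * FreeAlgebra.ι K (1 : Fin 2) * FreeAlgebra.ι K (1 : Fin 2) ∧
   Y = α • (FreeAlgebra.ι K (1 : Fin 2) * FreeAlgebra.ι K (0 : Fin 2) * FreeAlgebra.ι K (1 : Fin 2)) +
       β • (FreeAlgebra.ι K (1 : Fin 2) * FreeAlgebra.ι K (1 : Fin 2) * FreeAlgebra.ι K (0 : Fin 2)) +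
       γ • FreeAlgebra.ι K (1 : Fin 2))

abbrev DownUp (K : Type u) [Field K] (α β γ : K) := RingQuot (duRel K α β γ)

def duD (K : Type u) [Field K] (α β γ : K) : DownUp K α β γ :=
  RingQuot.mkAlgHom K (duRel K α β γ) (FreeAlgebra.ι K (0 : Fin 2))

def duU (K : Type u) [Field K] (α β γ : K) : DownUp K α β γ :=
  RingQuot.mkAlgHom K (duRel K α β γ) (FreeAlgebra.ι K (1 : Fin 2))

def duW (K : Type u) [Field K] (η : K) : DownUp K (1 + η) (-η) 1 :=
  -(duU K (1 + η) (-η) 1 * duD K (1 + η) (-η) 1) +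
    duD K (1 + η) (-η) 1 * duU K (1 + η) (-η) 1 +
    algebraMap K (DownUp K (1 + η) (-η) 1) ((η - 1)⁻¹)

namespace DUP

variable {K : Type u} [Field K]

/-! ### Generic lemmas in an arbitrary algebra -/

section Generic
variable {R : Type*} [Ring R] [Algebra K R] (η ε : K) (d u w : R)

lemma gen_dw (hw : w = -(u*d) + d*u + ε•(1:R))
    (hrel1 : d*d*u = (1+η)•(d*u*d) + (-η)•(u*d*d) + d) (hε : ε*(η-1) = 1) :
    d*w = η•(w*d) := by
  have hh1 : η - 1 ≠ 0 := by intro h; rw [h, mul_zero] at hε; exact zero_ne_one hε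
  obtain rfl : ε = (η-1)⁻¹ := eq_inv_of_mul_eq_one_left hε

  subst hw
  have h1 : d * (u * d) = d*u*d := by rw [mul_assoc]
  have h2 : d * (d * u) = d*d*u := by rw [mul_assoc]
  simp only [mul_add, add_mul, mul_neg, neg_mul, mul_smul_comm, smul_mul_assoc, mul_one, one_mul,
    smul_add, smul_neg, h1, h2, hrel1]
  match_scalars <;> (push_cast; first | ring1 | (field_simp; try ring1))

lemma gen_wu (hw : w = -(u*d) + d*u + ε•(1:R))
    (hrel2 : d*u*u = (1+η)•(u*d*u) + (-η)•(u*u*d) + u) (hε : ε*(η-1) = 1) :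
    w*u = η•(u*w) := by
  have hh1 : η - 1 ≠ 0 := by intro h; rw [h, mul_zero] at hε; exact zero_ne_one hε
  obtain rfl : ε = (η-1)⁻¹ := eq_inv_of_mul_eq_one_left hε

  subst hw
  have h1 : u * d * u = u*(d*u) := by rw [mul_assoc]
  have h2 : u * u * d = u*(u*d) := by rw [mul_assoc]
  simp only [mul_add, add_mul, mul_neg, neg_mul, mul_smul_comm, smul_mul_assoc, mul_one, one_mul,
    smul_add, smul_neg, hrel2, h1, h2]
  match_scalars <;> (push_cast; first | ring1 | (field_simp; try ring1))

lemma gen_rel1 (hw : w = -(u*d) + d*u + ε•(1:R))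
    (hdw : d*w = η•(w*d)) (hε : ε*(η-1) = 1) :
    d*d*u = (1+η)•(d*u*d) + (-η)•(u*d*d) + d := by
  have hh1 : η - 1 ≠ 0 := by intro h; rw [h, mul_zero] at hε; exact zero_ne_one hε
  obtain rfl : ε = (η-1)⁻¹ := eq_inv_of_mul_eq_one_left hε

  have hdu : d*u = w + u*d - (η-1)⁻¹•(1:R) := by rw [hw]; abel
  have e1 : d*d*u = d*w + (w*d + u*d*d - (η-1)⁻¹•d) - (η-1)⁻¹•d := by
    rw [mul_assoc, hdu, mul_sub, mul_add, mul_smul_comm, mul_one, ← mul_assoc, hdu,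
      sub_mul, add_mul, smul_mul_assoc, one_mul, mul_assoc u d d]
  rw [e1, hdw, hdu]
  simp only [sub_mul, add_mul, smul_mul_assoc, one_mul]
  match_scalars <;> (push_cast; first | ring1 | (field_simp; try ring1))

lemma gen_rel2 (hw : w = -(u*d) + d*u + ε•(1:R))
    (hwu : w*u = η•(u*w)) (hε : ε*(η-1) = 1) :
    d*u*u = (1+η)•(u*d*u) + (-η)•(u*u*d) + u := by
  have hh1 : η - 1 ≠ 0 := by intro h; rw [h, mul_zero] at hε; exact zero_ne_one hε
  obtain rfl : ε = (η-1)⁻¹ := eq_inv_of_mul_eq_one_left hε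

  have hdu : d*u = w + u*d - (η-1)⁻¹•(1:R) := by rw [hw]; abel
  have e1 : d*u*u = w*u + (u*w + u*(u*d) - (η-1)⁻¹•u) - (η-1)⁻¹•u := by
    rw [hdu, sub_mul, add_mul, smul_mul_assoc, one_mul, mul_assoc u d u, hdu,
      mul_sub, mul_add, mul_smul_comm, mul_one]
  rw [e1, hwu]
  have e2 : u*d*u = u*w + u*(u*d) - (η-1)⁻¹•u := by
    rw [mul_assoc u d u, hdu, mul_sub, mul_add, mul_smul_comm, mul_one]
  rw [e2, mul_assoc u u d]
  match_scalars <;> (push_cast; first | ring1 | (field_simp; try ring1))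

lemma gen_dwpow (hdw : d*w = η•(w*d)) : ∀ j : ℕ, d*w^j = η^j • (w^j*d)
  | 0 => by simp
  | (j+1) => by
    rw [pow_succ', ← mul_assoc, hdw, smul_mul_assoc, mul_assoc, gen_dwpow hdw j,
      mul_smul_comm, smul_smul, ← mul_assoc, ← pow_succ', ← pow_succ']

lemma gen_wupow (hwu : w*u = η•(u*w)) : ∀ i : ℕ, w*u^i = η^i • (u^i*w)
  | 0 => by simp
  | (i+1) => by
    rw [pow_succ, ← mul_assoc, gen_wupow hwu i, smul_mul_assoc, mul_assoc, hwu,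
      mul_smul_comm, smul_smul, ← mul_assoc, ← pow_succ, ← pow_succ]

lemma gen_dupow (hw : w = -(u*d) + d*u + ε•(1:R)) (hwu : w*u = η•(u*w)) (hε : ε*(η-1) = 1) :
    ∀ i : ℕ, d*u^(i+1) = u^(i+1)*d + (ε*(η^(i+1) - 1))•(u^i*w) - (((i:K)+1)*ε)•u^i := by
  have hh1 : η - 1 ≠ 0 := by intro h; rw [h, mul_zero] at hε; exact zero_ne_one hε
  obtain rfl : ε = (η-1)⁻¹ := eq_inv_of_mul_eq_one_left hε
  have hdu : d*u = w + u*d - (η-1)⁻¹•(1:R) := by rw [hw]; abel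
  intro i
  induction i with
  | zero =>
    rw [pow_one, pow_zero, one_mul, hdu]
    match_scalars <;> (push_cast; first | ring1 | (field_simp; try ring1))
  | succ i ih =>
    have e1 : d*u^(i+1+1) = (d*u^(i+1))*u := by rw [mul_assoc, ← pow_succ]
    rw [e1, ih]
    simp only [sub_mul, add_mul, smul_mul_assoc]
    rw [mul_assoc (u^(i+1)) d u, hdu, mul_assoc (u^i) w u, hwu, mul_smul_comm,
      ← mul_assoc (u^i) u w, ← pow_succ]
    simp only [mul_sub, mul_add, mul_smul_comm, mul_one, ← mul_assoc (u^(i+1)) u d, ← pow_succ]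
    match_scalars <;> (push_cast; first | ring1 | (field_simp; try ring1))

lemma gen_dmain (hw : w = -(u*d) + d*u + ε•(1:R)) (hdw : d*w = η•(w*d))
    (hwu : w*u = η•(u*w)) (hε : ε*(η-1) = 1) :
    ∀ i j : ℕ, d*(u^i*w^j) = η^j•(u^i*(w^j*d)) + (ε*(η^i - 1))•(u^(i-1)*w^(j+1))
      - (((i:ℕ):K)*ε)•(u^(i-1)*w^j)
  | 0, j => by
    simp only [pow_zero, one_mul, Nat.cast_zero, zero_mul, zero_smul, sub_zero, Nat.zero_sub,
      sub_self, mul_zero, add_zero]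
    rw [gen_dwpow η d w hdw j]
  | (i+1), j => by
    have e1 : d*(u^(i+1)*w^j) = (d*u^(i+1))*w^j := by rw [mul_assoc]
    rw [e1, gen_dupow η ε d u w hw hwu hε i]
    simp only [sub_mul, add_mul, smul_mul_assoc]
    rw [mul_assoc (u^(i+1)) d (w^j), gen_dwpow η d w hdw j,
      mul_assoc (u^i) w (w^j), ← pow_succ', mul_smul_comm, Nat.add_sub_cancel]
    match_scalars <;> (push_cast; try ring1)
  end Generic

/-! ### The module `F` and the operators -/

abbrev F (K : Type u) [Field K] : Type u := (ℕ × ℕ) →₀ K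

variable (η : K)

def dvec : ℕ × ℕ → F K
  | (0, j) => η ^ j • Finsupp.single (0, j) 1
  | (i+1, j) => η ^ j • Finsupp.single (i+1, j) 1
      + ((η-1)⁻¹ * (η^(i+1) - 1)) • Finsupp.single (i, j+1) 1
      - (((i : K) + 1) * (η-1)⁻¹) • Finsupp.single (i, j) 1

def D : Module.End K (F K) := Finsupp.lsum K fun p => LinearMap.toSpanSingleton K (F K) (dvec η p)

def Uop : Module.End K (F K) :=
  Finsupp.lsum K fun p => LinearMap.toSpanSingleton K (F K) (Finsupp.single (p.1 + 1, p.2) 1)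

def Wop : Module.End K (F K) := -(Uop * D η) + D η * Uop + (η-1)⁻¹ • 1

@[simp] lemma D_e (p : ℕ × ℕ) : D η (Finsupp.single p (1:K)) = dvec η p := by simp [D]

@[simp] lemma U_e (p : ℕ × ℕ) :
    Uop (K := K) (Finsupp.single p (1:K)) = Finsupp.single (p.1 + 1, p.2) (1:K) := by
  simp [Uop]

lemma endext {f g : Module.End K (F K)}
    (h : ∀ p : ℕ × ℕ, f (Finsupp.single p 1) = g (Finsupp.single p 1)) : f = g := by
  apply Finsupp.lhom_ext'
  intro p
  apply LinearMap.ext_ring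
  simpa using h p

lemma W_e (hη1 : η ≠ 1) (i j : ℕ) :
    Wop η (Finsupp.single (i,j) (1:K)) = η^i • Finsupp.single (i,j+1) (1:K) := by
  have h1 : η - 1 ≠ 0 := sub_ne_zero.mpr hη1
  rcases i with _ | i <;>
  · simp only [Wop, LinearMap.add_apply, LinearMap.neg_apply, LinearMap.smul_apply,
      Module.End.mul_apply, Module.End.one_apply, D_e, U_e, dvec, map_add, map_sub, map_smul,
      smul_add, smul_sub, smul_smul]
    match_scalars <;> (push_cast; first | ring1 | (field_simp; try ring1))

lemma hDW (hη1 : η ≠ 1) : D η * Wop η = η • (Wop η * D η) := by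
  have h1 : η - 1 ≠ 0 := sub_ne_zero.mpr hη1
  apply endext
  rintro ⟨i, j⟩
  rcases i with _ | i <;>
  · simp only [Module.End.mul_apply, LinearMap.smul_apply, dvec, W_e η hη1, D_e, U_e, map_add,
      map_sub, map_smul, smul_add, smul_sub, smul_smul]
    match_scalars <;> (push_cast; first | ring1 | (field_simp; try ring1))

lemma hWU (hη1 : η ≠ 1) : Wop η * Uop = η • (Uop * Wop η) := by
  apply endext
  rintro ⟨i, j⟩
  simp only [Module.End.mul_apply, LinearMap.smul_apply, U_e, W_e η hη1, map_smul]
  match_scalars <;> (try ring1)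

lemma hW_eq : Wop η = -(Uop * D η) + D η * Uop + (η-1)⁻¹ • (1 : Module.End K (F K)) := rfl

lemma heps (hη1 : η ≠ 1) : (η-1)⁻¹ * (η - 1) = 1 :=
  inv_mul_cancel₀ (sub_ne_zero.mpr hη1)

lemma rel1op (hη1 : η ≠ 1) :
    D η * D η * Uop = (1+η) • (D η * Uop * D η) + (-η) • (Uop * D η * D η) + D η :=
  gen_rel1 η ((η-1)⁻¹) (D η) Uop (Wop η) (hW_eq η) (hDW η hη1) (heps η hη1)

lemma rel2op (hη1 : η ≠ 1) :
    D η * Uop * Uop = (1+η) • (Uop * D η * Uop) + (-η) • (Uop * Uop * D η) + Uop :=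
  gen_rel2 η ((η-1)⁻¹) (D η) Uop (Wop η) (hW_eq η) (hWU η hη1) (heps η hη1)

def lift0 : FreeAlgebra K (Fin 2) →ₐ[K] Module.End K (F K) :=
  FreeAlgebra.lift K fun i => if i = (0 : Fin 2) then D η else Uop

@[simp] lemma lift0_d : lift0 η (FreeAlgebra.ι K (0 : Fin 2)) = D η := by simp [lift0]

@[simp] lemma lift0_u : lift0 η (FreeAlgebra.ι K (1 : Fin 2)) = Uop := by
  simp [lift0]

lemma lift0_rel (hη1 : η ≠ 1) :
    ∀ ⦃x y : FreeAlgebra K (Fin 2)⦄, duRel K (1+η) (-η) 1 x y → lift0 η x = lift0 η y := by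
  rintro x y (⟨rfl, rfl⟩ | ⟨rfl, rfl⟩) <;>
    simp only [map_mul, map_add, map_smul, lift0_d, lift0_u, one_smul]
  · exact rel1op η hη1
  · exact rel2op η hη1

def rho (hη1 : η ≠ 1) : DownUp K (1+η) (-η) 1 →ₐ[K] Module.End K (F K) :=
  RingQuot.liftAlgHom K ⟨lift0 η, lift0_rel η hη1⟩

variable (hη1 : η ≠ 1)

@[simp] lemma rho_d : rho η hη1 (duD K (1+η) (-η) 1) = D η := by
  simp [rho, duD, RingQuot.liftAlgHom_mkAlgHom_apply]

@[simp] lemma rho_u : rho η hη1 (duU K (1+η) (-η) 1) = Uop := by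
  simp [rho, duU, RingQuot.liftAlgHom_mkAlgHom_apply]

@[simp] lemma rho_w : rho η hη1 (duW K η) = Wop η := by
  rw [duW, map_add, map_add, map_neg, map_mul, map_mul, AlgHom.commutes, rho_d, rho_u, hW_eq,
    Algebra.algebraMap_eq_smul_one]

/-! ### Identities in the down-up algebra -/

lemma hW_A : duW K η = -(duU K (1+η) (-η) 1 * duD K (1+η) (-η) 1)
    + duD K (1+η) (-η) 1 * duU K (1+η) (-η) 1 + (η-1)⁻¹ • (1 : DownUp K (1+η) (-η) 1) := by
  rw [duW, Algebra.algebraMap_eq_smul_one]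

lemma relA1 : duD K (1+η) (-η) 1 * duD K (1+η) (-η) 1 * duU K (1+η) (-η) 1
    = (1+η) • (duD K (1+η) (-η) 1 * duU K (1+η) (-η) 1 * duD K (1+η) (-η) 1)
      + (-η) • (duU K (1+η) (-η) 1 * duD K (1+η) (-η) 1 * duD K (1+η) (-η) 1)
      + duD K (1+η) (-η) 1 := by
  have h := RingQuot.mkAlgHom_rel K (s := duRel K (1+η) (-η) 1)
    (Or.inl ⟨rfl, rfl⟩ : duRel K (1+η) (-η) 1
      (FreeAlgebra.ι K (0 : Fin 2) * FreeAlgebra.ι K (0 : Fin 2) * FreeAlgebra.ι K (1 : Fin 2)) _)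
  simpa only [map_mul, map_add, map_smul, one_smul, duD, duU] using h

lemma relA2 : duD K (1+η) (-η) 1 * duU K (1+η) (-η) 1 * duU K (1+η) (-η) 1
    = (1+η) • (duU K (1+η) (-η) 1 * duD K (1+η) (-η) 1 * duU K (1+η) (-η) 1)
      + (-η) • (duU K (1+η) (-η) 1 * duU K (1+η) (-η) 1 * duD K (1+η) (-η) 1)
      + duU K (1+η) (-η) 1 := by
  have h := RingQuot.mkAlgHom_rel K (s := duRel K (1+η) (-η) 1)
    (Or.inr ⟨rfl, rfl⟩ : duRel K (1+η) (-η) 1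
      (FreeAlgebra.ι K (0 : Fin 2) * FreeAlgebra.ι K (1 : Fin 2) * FreeAlgebra.ι K (1 : Fin 2)) _)
  simpa only [map_mul, map_add, map_smul, one_smul, duD, duU] using h

lemma hdwA (hη1 : η ≠ 1) : duD K (1+η) (-η) 1 * duW K η = η • (duW K η * duD K (1+η) (-η) 1) :=
  gen_dw η (η-1)⁻¹ _ _ _ (hW_A η) (relA1 η) (heps η hη1)

lemma hwuA (hη1 : η ≠ 1) : duW K η * duU K (1+η) (-η) 1 = η • (duU K (1+η) (-η) 1 * duW K η) :=
  gen_wu η (η-1)⁻¹ _ _ _ (hW_A η) (relA2 η) (heps η hη1)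

lemma dmainA (hη1 : η ≠ 1) (i j : ℕ) :
    duD K (1+η) (-η) 1 * (duU K (1+η) (-η) 1 ^ i * duW K η ^ j)
      = η^j • (duU K (1+η) (-η) 1 ^ i * (duW K η ^ j * duD K (1+η) (-η) 1))
        + ((η-1)⁻¹*(η^i - 1)) • (duU K (1+η) (-η) 1 ^ (i-1) * duW K η ^ (j+1))
        - (((i:ℕ):K)*(η-1)⁻¹) • (duU K (1+η) (-η) 1 ^ (i-1) * duW K η ^ j) :=
  gen_dmain η (η-1)⁻¹ _ _ _ (hW_A η) (hdwA η hη1) (hwuA η hη1) (heps η hη1) i j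

/-! ### Spanning of the quotient -/

def II : Ideal (DownUp K (1+η) (-η) 1) := Ideal.span {duD K (1+η) (-η) 1 - 1}

def gg (p : ℕ × ℕ) : DownUp K (1+η) (-η) 1 := duU K (1+η) (-η) 1 ^ p.1 * duW K η ^ p.2

def SK : Submodule K (DownUp K (1+η) (-η) 1) :=
  Submodule.span K (Set.range (gg η)) ⊔ (II η).restrictScalars K

lemma sub_one_mem (z : DownUp K (1+η) (-η) 1) : z * (duD K (1+η) (-η) 1 - 1) ∈ II η := by
  have h : (duD K (1+η) (-η) 1 - 1) ∈ II η := Submodule.mem_span_singleton_self _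
  simpa [smul_eq_mul] using Submodule.smul_mem (II η) z h

lemma gg_mem (p : ℕ × ℕ) : gg η p ∈ SK η :=
  Submodule.mem_sup_left (Submodule.subset_span ⟨p, rfl⟩)

lemma II_mem_SK {z : DownUp K (1+η) (-η) 1} (h : z ∈ II η) : z ∈ SK η :=
  Submodule.mem_sup_right h

lemma d_mul_span (hη1 : η ≠ 1) {y : DownUp K (1+η) (-η) 1}
    (hy : y ∈ Submodule.span K (Set.range (gg η))) : duD K (1+η) (-η) 1 * y ∈ SK η := by
  induction hy using Submodule.span_induction with
  | mem x hx =>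
    obtain ⟨⟨i, j⟩, rfl⟩ := hx
    rw [show gg η (i,j) = duU K (1+η) (-η) 1 ^ i * duW K η ^ j from rfl, dmainA η hη1 i j]
    refine Submodule.sub_mem _ (Submodule.add_mem _ ?_ ?_) ?_
    · apply Submodule.smul_mem
      have he : duU K (1+η) (-η) 1 ^ i * (duW K η ^ j * duD K (1+η) (-η) 1)
          = (duU K (1+η) (-η) 1 ^ i * duW K η ^ j) * (duD K (1+η) (-η) 1 - 1)
            + duU K (1+η) (-η) 1 ^ i * duW K η ^ j := by
        rw [mul_sub, mul_one, mul_assoc]; abel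
      rw [he]
      exact Submodule.add_mem _ (II_mem_SK η (sub_one_mem η _)) (gg_mem η (i,j))
    · exact Submodule.smul_mem _ _ (gg_mem η (i-1, j+1))
    · exact Submodule.smul_mem _ _ (gg_mem η (i-1, j))
  | zero => simpa using Submodule.zero_mem (SK η)
  | add a b _ _ ha hb => rw [mul_add]; exact Submodule.add_mem _ ha hb
  | smul c a _ ha => rw [mul_smul_comm]; exact Submodule.smul_mem _ _ ha

lemma u_mul_span {y : DownUp K (1+η) (-η) 1}
    (hy : y ∈ Submodule.span K (Set.range (gg η))) : duU K (1+η) (-η) 1 * y ∈ SK η := by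
  induction hy using Submodule.span_induction with
  | mem x hx =>
    obtain ⟨⟨i, j⟩, rfl⟩ := hx
    have he : duU K (1+η) (-η) 1 * gg η (i,j) = gg η (i+1, j) := by
      rw [show gg η (i,j) = duU K (1+η) (-η) 1 ^ i * duW K η ^ j from rfl,
        show gg η (i+1,j) = duU K (1+η) (-η) 1 ^ (i+1) * duW K η ^ j from rfl,
        ← mul_assoc, ← pow_succ']
    rw [he]; exact gg_mem η _
  | zero => simpa using Submodule.zero_mem (SK η)
  | add a b _ _ ha hb => rw [mul_add]; exact Submodule.add_mem _ ha hb
  | smul c a _ ha => rw [mul_smul_comm]; exact Submodule.smul_mem _ _ ha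

lemma d_mul_mem (hη1 : η ≠ 1) {s : DownUp K (1+η) (-η) 1} (hs : s ∈ SK η) :
    duD K (1+η) (-η) 1 * s ∈ SK η := by
  obtain ⟨y, hy, z, hz, rfl⟩ := Submodule.mem_sup.mp hs
  rw [mul_add]
  exact Submodule.add_mem _ (d_mul_span η hη1 hy) (II_mem_SK η (Ideal.mul_mem_left _ _ hz))

lemma u_mul_mem {s : DownUp K (1+η) (-η) 1} (hs : s ∈ SK η) :
    duU K (1+η) (-η) 1 * s ∈ SK η := by
  obtain ⟨y, hy, z, hz, rfl⟩ := Submodule.mem_sup.mp hs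
  rw [mul_add]
  exact Submodule.add_mem _ (u_mul_span η hy) (II_mem_SK η (Ideal.mul_mem_left _ _ hz))

lemma SK_top (hη1 : η ≠ 1) (a : DownUp K (1+η) (-η) 1) : a ∈ SK η := by
  have h1 : (1 : DownUp K (1+η) (-η) 1) ∈ SK η := by
    have := gg_mem η (0, 0)
    simpa [gg] using this
  have key : ∀ b : FreeAlgebra K (Fin 2), ∀ s ∈ SK η,
      RingQuot.mkAlgHom K (duRel K (1+η) (-η) 1) b * s ∈ SK η := by
    intro b
    induction b using FreeAlgebra.induction with
    | grade0 r =>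
      intro s hs
      rw [AlgHom.commutes, ← Algebra.smul_def]
      exact Submodule.smul_mem _ _ hs
    | grade1 x =>
      intro s hs
      fin_cases x
      · exact d_mul_mem η hη1 hs
      · exact u_mul_mem η hs
    | mul x y hx hy =>
      intro s hs
      rw [map_mul, mul_assoc]
      exact hx _ (hy s hs)
    | add x y hx hy =>
      intro s hs
      rw [map_add, add_mul]
      exact Submodule.add_mem _ (hx s hs) (hy s hs)
  obtain ⟨b, rfl⟩ := RingQuot.mkAlgHom_surjective K (duRel K (1+η) (-η) 1) a
  simpa using key b 1 h1

/-! ### The evaluation map θ -/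

def theta (hη1 : η ≠ 1) : DownUp K (1+η) (-η) 1 →ₗ[K] F K :=
  (LinearMap.applyₗ (Finsupp.single ((0:ℕ),(0:ℕ)) (1:K))).comp (rho η hη1).toLinearMap

variable (hη1 : η ≠ 1)

lemma theta_apply (a : DownUp K (1+η) (-η) 1) :
    theta η hη1 a = rho η hη1 a (Finsupp.single ((0:ℕ),(0:ℕ)) (1:K)) := rfl

lemma Wpow_e (hη1 : η ≠ 1) (j : ℕ) :
    (Wop η ^ j) (Finsupp.single ((0:ℕ),(0:ℕ)) (1:K)) = Finsupp.single ((0:ℕ), j) (1:K) := by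
  induction j with
  | zero => rfl
  | succ j ih =>
    rw [pow_succ', Module.End.mul_apply, ih, W_e η hη1]
    simp

lemma Upow_e (i j : ℕ) :
    (Uop ^ i) (Finsupp.single ((0:ℕ), j) (1:K)) = Finsupp.single (i, j) (1:K) := by
  induction i with
  | zero => rfl
  | succ i ih =>
    rw [pow_succ', Module.End.mul_apply, ih, U_e]

lemma theta_gen (p : ℕ × ℕ) : theta η hη1 (gg η p) = Finsupp.single p (1:K) := by
  rcases p with ⟨i, j⟩
  rw [theta_apply, gg, map_mul, map_pow, map_pow, rho_u, rho_w, Module.End.mul_apply,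
    Wpow_e η hη1, Upow_e]

lemma theta_wpow (m : ℕ) : theta η hη1 (duW K η ^ m) = Finsupp.single ((0:ℕ), m) (1:K) := by
  have := theta_gen η hη1 (0, m)
  simpa [gg] using this

lemma theta_II {a : DownUp K (1+η) (-η) 1} (h : a ∈ II η) : theta η hη1 a = 0 := by
  rw [II, Ideal.span] at h
  obtain ⟨b, rfl⟩ := Submodule.mem_span_singleton.mp h
  have h0 : rho η hη1 (duD K (1+η) (-η) 1 - 1) (Finsupp.single ((0:ℕ),(0:ℕ)) (1:K)) = 0 := by
    rw [map_sub, map_one, LinearMap.sub_apply, Module.End.one_apply, rho_d, D_e]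
    simp [dvec]
  rw [smul_eq_mul, theta_apply, map_mul, Module.End.mul_apply, h0, map_zero]

lemma theta_ker {a : DownUp K (1+η) (-η) 1} (h : theta η hη1 a = 0) : a ∈ II η := by
  have hs := SK_top η hη1 a
  obtain ⟨y, hy, z, hz, rfl⟩ := Submodule.mem_sup.mp hs
  obtain ⟨c, rfl⟩ := Finsupp.mem_span_range_iff_exists_finsupp.mp hy
  have h1 : theta η hη1 (c.sum fun p k => k • gg η p) = c := by
    rw [map_finsuppSum]
    rw [show (c.sum fun p k => theta η hη1 (k • gg η p))
        = c.sum fun p k => Finsupp.single p k from ?_]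
    · exact Finsupp.sum_single c
    · apply Finsupp.sum_congr
      intro p hp
      rw [map_smul, theta_gen, Finsupp.smul_single_one]
  have h2 : theta η hη1 z = 0 := theta_II η hη1 hz
  rw [map_add, h1, h2, add_zero] at h
  subst h
  simpa using hz

/-! ### Coefficient analysis on F -/

lemma D_single' (p : ℕ × ℕ) (k : K) : D η (Finsupp.single p k) = k • dvec η p := by
  simp [D]

lemma D_apply (v : F K) (a b : ℕ) :
    (D η v) (a,b) = η^b * v (a,b)
      + (if b = 0 then 0 else (η-1)⁻¹*(η^(a+1)-1) * v (a+1, b-1))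
      - ((a:K)+1)*(η-1)⁻¹ * v (a+1,b) := by
  induction v using Finsupp.induction_linear with
  | zero => simp
  | add f g hf hg =>
    rw [map_add, Finsupp.add_apply, hf, hg]
    simp only [Finsupp.add_apply]
    split_ifs <;> ring
  | single p k =>
    rcases p with ⟨i, j⟩
    rw [D_single']
    rcases i with _ | i <;> rcases b with _ | b <;>
      simp only [dvec, Finsupp.smul_apply, Finsupp.add_apply, Finsupp.sub_apply,
        Finsupp.single_apply, Prod.mk.injEq, smul_eq_mul, smul_add, smul_sub] <;>
      split_ifs <;>
      first
        | ring1
        | (simp_all; try ring1)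
        | omega

def topI (v : F K) : ℕ := v.support.sup Prod.fst

lemma coeff_zero_of_lt {v : F K} {a : ℕ} (h : topI v < a) (b : ℕ) : v (a,b) = 0 := by
  by_contra hc
  have hm : ((a,b) : ℕ × ℕ) ∈ v.support := Finsupp.mem_support_iff.mpr hc
  have := Finset.le_sup (f := Prod.fst) hm
  change a ≤ topI v at this
  omega

lemma D_apply_top {v : F K} {n : ℕ} (h : topI v ≤ n) (j : ℕ) :
    (D η v) (n,j) = η^j * v (n,j) := by
  have hz : ∀ c, v (n+1, c) = 0 := fun c => coeff_zero_of_lt (a := n+1) (by omega) c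
  rw [D_apply, hz j]
  split_ifs with hb
  · ring
  · rw [hz (j-1)]; ring

lemma topI_D (v : F K) : topI (D η v) ≤ topI v := by
  apply Finset.sup_le
  rintro ⟨a, b⟩ hp
  rw [Finsupp.mem_support_iff] at hp
  by_contra h
  push_neg at h
  apply hp
  have h1 : ∀ c, v (a, c) = 0 := fun c => coeff_zero_of_lt (a := a) h c
  have h2 : ∀ c, v (a+1, c) = 0 := fun c => coeff_zero_of_lt (a := a+1) (by omega) c
  rw [D_apply, h1, h2, h2]
  split_ifs with hb <;> ring

lemma rho_algebraMap_apply (c : K) (v : F K) :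
    rho η hη1 (algebraMap K (DownUp K (1+η) (-η) 1) c) v = c • v := by
  rw [AlgHom.commutes, Algebra.algebraMap_eq_smul_one, LinearMap.smul_apply, Module.End.one_apply]

lemma exists_eig : ∀ n : ℕ, ∀ v : F K, v ≠ 0 → topI v ≤ n →
    ∃ (b : DownUp K (1+η) (-η) 1) (m : ℕ), rho η hη1 b v ≠ 0 ∧
      D η (rho η hη1 b v) = η^m • rho η hη1 b v := by
  intro n
  induction n using Nat.strong_induction_on with
  | _ n IH =>
  suffices h : ∀ mc : ℕ, ∀ v : F K, v ≠ 0 → topI v ≤ n →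
      (v.support.filter (fun p => p.1 = n)).card ≤ mc →
      ∃ (b : DownUp K (1+η) (-η) 1) (m : ℕ), rho η hη1 b v ≠ 0 ∧
        D η (rho η hη1 b v) = η^m • rho η hη1 b v by
    intro v hv htop
    exact h _ v hv htop le_rfl
  intro mc
  induction mc with
  | zero =>
    intro v hv htop hcard
    have hlev : ∀ j, v (n, j) = 0 := by
      intro j
      by_contra hc
      have hmem : ((n,j) : ℕ × ℕ) ∈ v.support.filter (fun p => p.1 = n) := by
        simp [Finsupp.mem_support_iff, hc]
      have := Finset.card_pos.mpr ⟨_, hmem⟩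
      omega
    rcases Nat.eq_zero_or_pos n with rfl | hn
    · exfalso
      apply hv
      ext ⟨a, c⟩
      rcases Nat.eq_zero_or_pos a with rfl | ha
      · simp [hlev c]
      · simp [coeff_zero_of_lt (show topI v < a by omega) c]
    · have h2 : topI v ≤ n - 1 := by
        apply Finset.sup_le
        rintro ⟨a, c⟩ hp
        rw [Finsupp.mem_support_iff] at hp
        have h3 : a ≤ topI v := Finset.le_sup (f := Prod.fst) (Finsupp.mem_support_iff.mpr hp)
        have h4 : a ≠ n := by rintro rfl; exact hp (hlev c)
        change a ≤ n - 1
        omega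
      exact IH (n-1) (by omega) v hv h2
  | succ mc ihmc =>
    intro v hv htop hcard
    by_cases hle : (v.support.filter (fun p => p.1 = n)).card ≤ mc
    · exact ihmc v hv htop hle
    · have hpos : 0 < (v.support.filter (fun p => p.1 = n)).card := by omega
      obtain ⟨p1, hp1⟩ := Finset.card_pos.mp hpos
      have hp1n : p1.1 = n := (Finset.mem_filter.mp hp1).2
      set j1 := p1.2 with hj1
      have hp1mem : ((n, j1) : ℕ × ℕ) ∈ v.support.filter (fun p => p.1 = n) := by
        rwa [show ((n, j1) : ℕ × ℕ) = p1 by rw [← hp1n, hj1]]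
      set v' := D η v - η^j1 • v with hv'
      have hco : ∀ j, v' (n, j) = (η^j - η^j1) * v (n, j) := by
        intro j
        rw [hv', Finsupp.sub_apply, Finsupp.smul_apply, D_apply_top η htop, smul_eq_mul]
        ring
      have hv'top : topI v' ≤ n := by
        apply Finset.sup_le
        rintro ⟨a, c⟩ hp
        have hsub := Finsupp.support_sub (f := D η v) (g := η^j1 • v) hp
        rcases Finset.mem_union.mp hsub with hh | hh
        · have := Finset.le_sup (f := Prod.fst) hh
          change a ≤ topI (D η v) at this
          have := topI_D η v
          change a ≤ n
          omega
        · have hsm := Finsupp.support_smul hh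
          have := Finset.le_sup (f := Prod.fst) hsm
          change a ≤ topI v at this
          change a ≤ n
          omega
      rcases eq_or_ne v' 0 with h0 | h0
      · refine ⟨1, j1, ?_, ?_⟩
        · simpa using hv
        · have := sub_eq_zero.mp h0
          simpa using this
      · have hcard' : (v'.support.filter (fun p => p.1 = n)).card ≤ mc := by
          have hss : v'.support.filter (fun p => p.1 = n)
              ⊆ (v.support.filter (fun p => p.1 = n)).erase (n, j1) := by
            rintro ⟨a, c⟩ hq
            obtain ⟨hq1, hq2⟩ := Finset.mem_filter.mp hq
            rw [Finsupp.mem_support_iff] at hq1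
            simp only at hq2
            rw [hq2] at hq1 ⊢
            rw [hco c] at hq1
            have hvc : v (n, c) ≠ 0 := by
              intro hz; exact hq1 (by rw [hz, mul_zero])
            have hcj : c ≠ j1 := by
              rintro rfl; exact hq1 (by ring)
            apply Finset.mem_erase.mpr
            refine ⟨by simpa using hcj, ?_⟩
            simp [Finsupp.mem_support_iff, hvc]
          have := Finset.card_le_card hss
          rw [Finset.card_erase_of_mem hp1mem] at this
          omega
        obtain ⟨b, m, hb1, hb2⟩ := ihmc v' h0 hv'top hcard'
        have hrw : rho η hη1 (b * (duD K (1+η) (-η) 1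
            - algebraMap K (DownUp K (1+η) (-η) 1) (η^j1))) v = rho η hη1 b v' := by
          rw [map_mul, Module.End.mul_apply, map_sub, LinearMap.sub_apply, rho_d,
            rho_algebraMap_apply]
        exact ⟨_, m, by rwa [hrw], by rwa [hrw]⟩

/-! ### Classification of eigenvectors and the main theorem -/

lemma pow_inj (hη0 : η ≠ 0) (hη : ∀ n : ℕ, 0 < n → η ^ n ≠ 1) {a b : ℕ}
    (h : η^a = η^b) : a = b := by
  have key : ∀ a b : ℕ, a ≤ b → η^a = η^b → a = b := by
    intro a b hab he
    by_contra hne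
    have h1 : η^a * η^(b-a) = η^a * 1 := by
      rw [mul_one, ← pow_add]
      rw [show a + (b - a) = b by omega]
      exact he.symm
    have h2 := mul_left_cancel₀ (pow_ne_zero a hη0) h1
    exact hη (b-a) (by omega) h2
  rcases le_total a b with hab | hab
  · exact key a b hab h
  · exact (key b a hab h.symm).symm

lemma eig_classify [CharZero K] (hη0 : η ≠ 0) (hη : ∀ n : ℕ, 0 < n → η ^ n ≠ 1)
    {v : F K} (hv : v ≠ 0) {m : ℕ} (h : D η v = η^m • v) :
    ∃ c : K, c ≠ 0 ∧ v = c • Finsupp.single ((0:ℕ), m) (1:K) := by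
  have hη1 : η ≠ 1 := fun he => hη 1 one_pos (by rw [he, pow_one])
  have h1 : η - 1 ≠ 0 := sub_ne_zero.mpr hη1
  set n := topI v with hn
  have hlev : ∀ j, v (n, j) ≠ 0 → j = m := by
    intro j hj
    have h2 : η^j * v (n,j) = η^m * v (n,j) := by
      have h3 := congrArg (fun x : F K => x (n,j)) h
      simp only [Finsupp.smul_apply, smul_eq_mul] at h3
      rw [D_apply_top η le_rfl] at h3
      exact h3
    exact pow_inj η hη0 hη (mul_right_cancel₀ hj h2)
  have hnm : v (n, m) ≠ 0 := by
    have hne : v.support.Nonempty := Finsupp.support_nonempty_iff.mpr hv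
    obtain ⟨⟨a, j⟩, hp, he⟩ := Finset.exists_mem_eq_sup _ hne Prod.fst
    have hj := Finsupp.mem_support_iff.mp hp
    have ha : a = n := by rw [hn, topI, he]
    rw [ha] at hj
    rwa [hlev j hj] at hj
  have hn0 : n = 0 := by
    by_contra hnz
    have e := congrArg (fun x : F K => x (n-1, m)) h
    simp only [Finsupp.smul_apply, smul_eq_mul] at e
    rw [D_apply] at e
    rw [show n - 1 + 1 = n by omega] at e
    have hz1 : (if m = 0 then (0:K) else (η-1)⁻¹*(η^n-1) * v (n, m-1)) = 0 := by
      split_ifs with hm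
      · rfl
      · have : v (n, m-1) = 0 := by
          by_contra hc
          have := hlev _ hc
          omega
        rw [this, mul_zero]
    rw [hz1] at e
    have e2 : (((n-1 : ℕ):K) + 1)*(η-1)⁻¹ * v (n, m) = 0 := by linear_combination -e
    have hc1 : (((n-1 : ℕ):K) + 1) ≠ 0 := by
      have hcast : (((n-1 : ℕ):K) + 1) = (((n-1+1 : ℕ)) : K) := by push_cast; ring
      rw [hcast]
      exact Nat.cast_ne_zero.mpr (by omega)
    have := mul_ne_zero (mul_ne_zero hc1 (inv_ne_zero h1)) hnm
    exact this e2
  have hsub : v.support ⊆ {((0:ℕ), m)} := by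
    rintro ⟨a, j⟩ hp
    have h3 : a ≤ topI v := Finset.le_sup (f := Prod.fst) hp
    have ha : a = 0 := by omega
    have hj := Finsupp.mem_support_iff.mp hp
    rw [ha] at hj
    have hj' : v (n, j) ≠ 0 := by rwa [hn0]
    have hjm := hlev j hj'
    simp [ha, hjm]
  have hv2 := Finsupp.support_subset_singleton.mp hsub
  refine ⟨v (0, m), ?_, ?_⟩
  · rw [← hn0]; exact hnm
  · rw [Finsupp.smul_single_one]
    exact hv2

lemma exists_target [CharZero K] (hη0 : η ≠ 0) (hη : ∀ n : ℕ, 0 < n → η ^ n ≠ 1)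
    (v : F K) (hv : v ≠ 0) :
    ∃ (b : DownUp K (1+η) (-η) 1) (m : ℕ), rho η hη1 b v = Finsupp.single ((0:ℕ), m) (1:K) := by
  obtain ⟨b0, m0, hb1, hb2⟩ := exists_eig η hη1 (topI v) v hv le_rfl
  obtain ⟨c, hc, hform⟩ := eig_classify η hη0 hη hb1 hb2
  refine ⟨algebraMap K (DownUp K (1+η) (-η) 1) c⁻¹ * b0, m0, ?_⟩
  rw [map_mul, Module.End.mul_apply, hform, rho_algebraMap_apply, smul_smul,
    inv_mul_cancel₀ hc, one_smul]

end DUP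

/-- Lemma 4.6: in `A = A_η = A(1+η, −η, 1)` with `η` nonzero and not a
root of unity, `ε = (η−1)⁻¹` and `w = −ud + du + ε`, every nonzero submodule `U` of
`N = A/A(d−1)` contains the image of `w^m` for some `m ≥ 0`. -/
theorem downUp_submodule_contains_w_power {K : Type u} [Field K] [CharZero K]
    (η : K) (hη0 : η ≠ 0) (hη : ∀ n : ℕ, 0 < n → η ^ n ≠ 1)
    (U : Submodule (DownUp K (1 + η) (-η) 1)
      (DownUp K (1 + η) (-η) 1 ⧸ (Ideal.span {duD K (1 + η) (-η) 1 - 1})))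
    (hU : U ≠ ⊥) :
    ∃ m : ℕ, (Ideal.span {duD K (1 + η) (-η) 1 - 1}).mkQ ((duW K η) ^ m) ∈ U := by
  have hη1 : η ≠ 1 := fun he => hη 1 one_pos (by rw [he, pow_one])
  have hII : Ideal.span {duD K (1 + η) (-η) 1 - 1} = DUP.II η := rfl
  obtain ⟨x, hxU, hx0⟩ := (Submodule.ne_bot_iff U).mp hU
  obtain ⟨a, rfl⟩ := (Ideal.span {duD K (1 + η) (-η) 1 - 1}).mkQ_surjective x
  have hta : DUP.theta η hη1 a ≠ 0 := by
    intro h0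
    apply hx0
    rw [Submodule.mkQ_apply, Submodule.Quotient.mk_eq_zero, hII]
    exact DUP.theta_ker η hη1 h0
  obtain ⟨b, m, hb⟩ := DUP.exists_target η hη1 hη0 hη _ hta
  refine ⟨m, ?_⟩
  have h1 : DUP.theta η hη1 (b * a) = DUP.theta η hη1 ((duW K η)^m) := by
    rw [DUP.theta_apply, map_mul, Module.End.mul_apply, ← DUP.theta_apply η hη1 a, hb,
      DUP.theta_wpow]
  have h2 : b * a - (duW K η)^m ∈ DUP.II η := by
    apply DUP.theta_ker η hη1
    rw [map_sub, h1, sub_self]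
  have h3 : (Ideal.span {duD K (1 + η) (-η) 1 - 1}).mkQ ((duW K η)^m)
      = (Ideal.span {duD K (1 + η) (-η) 1 - 1}).mkQ (b * a) := by
    rw [Submodule.mkQ_apply, Submodule.mkQ_apply]
    exact ((Submodule.Quotient.eq _).mpr (by rw [hII]; exact h2)).symm
  rw [h3]
  have h4 : (Ideal.span {duD K (1 + η) (-η) 1 - 1}).mkQ (b * a)
      = b • (Ideal.span {duD K (1 + η) (-η) 1 - 1}).mkQ a := by
    rw [Submodule.mkQ_apply, Submodule.mkQ_apply, ← Submodule.Quotient.mk_smul, smul_eq_mul]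
  rw [h4]
  exact U.smul_mem b hxU

end
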